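/- Let m₁, m₂ ≥ 1 and let P ⊆ {1,…,m₁}×{1,…,m₂} be a sparsity pattern. Define the generic rank of P as the maximum of rank(M) over all real m₁×m₂ matrices M with M_{ij} = 0 for (i,j) ∉ P, and define a matching of P as a subset S ⊆ P in which no two pairs share a first coordinate and no two pairs share a second coordinate. Then the generic rank of P equals the maximum cardinality of a matching of P. -/

import Mathlib

open Matrix Submodule

/-- Select linearly independent columns realizing the rank. -/
private lemma col_select {a b : ℕ} (A : Matrix (Fin a) (Fin b) ℝ) :
    ∃ g : Fin A.rank → Fin b, Function.Injective g ∧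
      LinearIndependent ℝ (fun i => Aᵀ (g i)) := by
  classical
  obtain ⟨s, hsub, hspan, hli⟩ := exists_linearIndependent ℝ (Set.range Aᵀ)
  have hfin : s.Finite := (Set.finite_range Aᵀ).subset hsub
  haveI : Fintype s := hfin.fintype
  have hcard : Fintype.card s = A.rank := by
    rw [A.rank_eq_finrank_span_cols, show A.col = Aᵀ from rfl, ← hspan, finrank_span_set_eq_card hli,
      Set.toFinset_card]
  let e : Fin A.rank ≃ s := (Fintype.equivFinOfCardEq hcard).symm
  have hmem : ∀ i : Fin A.rank, ∃ j, Aᵀ j = (e i : Fin a → ℝ) := fun i => hsub (e i).2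
  choose g hg using hmem
  refine ⟨g, ?_, ?_⟩
  · intro i i' h
    apply e.injective
    apply Subtype.ext
    rw [← hg i, ← hg i', h]
  · have hfun : (fun i => Aᵀ (g i)) = (fun x : s => (x : Fin a → ℝ)) ∘ e := by
      funext i; simp [hg i]
    rw [hfun]
    exact hli.comp e e.injective

private lemma rank_submatrix_le'' {a b r : ℕ} (A : Matrix (Fin a) (Fin b) ℝ)
    (f : Fin r → Fin a) (g : Fin r → Fin b) :
    (A.submatrix f g).rank ≤ A.rank := by
  classical
  have h : A.submatrix f g = (Matrix.of fun i k => if f i = k then (1:ℝ) else 0) * A *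
      (Matrix.of fun k j => if k = g j then (1:ℝ) else 0) := by
    ext i j
    simp [Matrix.mul_apply, ite_mul, mul_ite, Finset.sum_ite_eq, Finset.sum_ite_eq']
  rw [h]
  exact le_trans (rank_mul_le_left _ _) (rank_mul_le_right _ _)

private lemma matching_of_rank {a b : ℕ} (M : Matrix (Fin a) (Fin b) ℝ) :
    ∃ f : Fin M.rank → Fin a, ∃ g : Fin M.rank → Fin b,
      Function.Injective f ∧ Function.Injective g ∧ ∀ i, M (f i) (g i) ≠ 0 := by
  classical
  obtain ⟨g, hginj, hgli⟩ := col_select M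
  set N : Matrix (Fin a) (Fin M.rank) ℝ := M.submatrix id g with hN
  have hNT : LinearIndependent ℝ Nᵀ := by
    have : Nᵀ = fun i => Mᵀ (g i) := by
      funext i j; rfl
    rw [this]; exact hgli
  have hNrank : Nᵀ.rank = M.rank := by
    rw [rank_transpose, N.rank_eq_finrank_span_cols, show N.col = Nᵀ from rfl, finrank_span_eq_card hNT,
      Fintype.card_fin]
  obtain ⟨f0, hf0inj, hf0li⟩ := col_select Nᵀ
  let f : Fin M.rank → Fin a := fun i => f0 (Fin.cast hNrank.symm i)
  have hfinj : Function.Injective f :=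
    hf0inj.comp (Fin.cast_injective _)
  -- rows of the square matrix Q are linearly independent
  let Q : Matrix (Fin M.rank) (Fin M.rank) ℝ := Matrix.of fun i j => N (f i) j
  have hQli : LinearIndependent ℝ (fun i => Q i) := by
    have h1 : (fun i : Fin M.rank => Q i) = (fun i => Nᵀᵀ (f0 i)) ∘ (Fin.cast hNrank.symm) := by
      funext i; rfl
    rw [h1]
    exact hf0li.comp _ (Fin.cast_injective _)
  have hQdet : Q.det ≠ 0 := by
    have := Matrix.linearIndependent_rows_iff_isUnit.mp hQli
    exact (Matrix.isUnit_iff_isUnit_det Q).mp this |>.ne_zero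
  -- expand the determinant
  have hterm : ∃ σ : Equiv.Perm (Fin M.rank),
      (∏ i, Q (σ i) i) ≠ 0 := by
    by_contra hcon
    push_neg at hcon
    apply hQdet
    rw [Matrix.det_apply]
    apply Finset.sum_eq_zero
    intro σ _
    rw [hcon σ, smul_zero]
  obtain ⟨σ, hσ⟩ := hterm
  rw [Finset.prod_ne_zero_iff] at hσ
  exact ⟨fun i => f (σ i), g, hfinj.comp σ.injective, hginj,
    fun i => hσ i (Finset.mem_univ i)⟩


/-- For a sparsity pattern `P ⊆ {1,…,m₁} × {1,…,m₂}`, the generic rank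
(the maximum of `rank M` over all real `m₁ × m₂` matrices supported on `P`) equals the
maximum cardinality of a matching of `P` (a subset of `P` in which no two pairs share a
first coordinate and no two pairs share a second coordinate). -/
theorem generic_rank_eq_max_matching
    (m₁ m₂ : ℕ) (h₁ : 1 ≤ m₁) (h₂ : 1 ≤ m₂)
    (P : Finset (Fin m₁ × Fin m₂)) :
    sSup {r : ℕ | ∃ M : Matrix (Fin m₁) (Fin m₂) ℝ,
        (∀ i j, (i, j) ∉ P → M i j = 0) ∧ M.rank = r}
    =
    sSup {c : ℕ | ∃ S : Finset (Fin m₁ × Fin m₂), S ⊆ P ∧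
        (∀ p ∈ S, ∀ q ∈ S, (p.1 = q.1 ∨ p.2 = q.2) → p = q) ∧
        S.card = c} := by
  classical
  have bddL : BddAbove {r : ℕ | ∃ M : Matrix (Fin m₁) (Fin m₂) ℝ,
      (∀ i j, (i, j) ∉ P → M i j = 0) ∧ M.rank = r} := by
    refine ⟨m₁, ?_⟩
    rintro r ⟨M, _, rfl⟩
    exact M.rank_le_height
  have bddR : BddAbove {c : ℕ | ∃ S : Finset (Fin m₁ × Fin m₂), S ⊆ P ∧
      (∀ p ∈ S, ∀ q ∈ S, (p.1 = q.1 ∨ p.2 = q.2) → p = q) ∧ S.card = c} := by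
    refine ⟨P.card, ?_⟩
    rintro c ⟨S, hS, _, rfl⟩
    exact Finset.card_le_card hS
  apply le_antisymm
  · apply csSup_le
    · exact ⟨0, 0, fun i j _ => rfl, Matrix.rank_zero⟩
    · rintro r ⟨M, hsupp, rfl⟩
      obtain ⟨f, g, hf, hg, hne⟩ := matching_of_rank M
      apply le_csSup bddR
      refine ⟨(Finset.univ : Finset (Fin M.rank)).image (fun i => (f i, g i)), ?_, ?_, ?_⟩
      · intro p hp
        simp only [Finset.mem_image, Finset.mem_univ, true_and] at hp
        obtain ⟨i, rfl⟩ := hp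
        by_contra hpP
        exact hne i (hsupp _ _ hpP)
      · rintro p hp q hq hpq
        simp only [Finset.mem_image, Finset.mem_univ, true_and] at hp hq
        obtain ⟨i, rfl⟩ := hp; obtain ⟨j, rfl⟩ := hq
        rcases hpq with h | h
        · cases hf h; rfl
        · cases hg h; rfl
      · rw [Finset.card_image_of_injective _ (fun i j h => hf (congrArg Prod.fst h)),
          Finset.card_univ, Fintype.card_fin]
  · apply csSup_le
    · exact ⟨0, ∅, Finset.empty_subset P, by simp, rfl⟩
    · rintro c ⟨S, hSP, hmat, rfl⟩
      set M : Matrix (Fin m₁) (Fin m₂) ℝ :=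
        Matrix.of fun i j => if (i, j) ∈ S then (1:ℝ) else 0 with hM
      have hrank : M.rank = S.card := by
        apply le_antisymm
        · obtain ⟨f, g, hf, hg, hne⟩ := matching_of_rank M
          have himg : (Finset.univ : Finset (Fin M.rank)).image (fun i => (f i, g i)) ⊆ S := by
            intro p hp
            simp only [Finset.mem_image, Finset.mem_univ, true_and] at hp
            obtain ⟨i, rfl⟩ := hp
            by_contra hc
            exact hne i (if_neg hc)
          calc M.rank
              = ((Finset.univ : Finset (Fin M.rank)).image (fun i => (f i, g i))).card := by
                rw [Finset.card_image_of_injective _ (fun i j h => hf (congrArg Prod.fst h)),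
                  Finset.card_univ, Fintype.card_fin]
            _ ≤ S.card := Finset.card_le_card himg
        · let e : Fin S.card ≃ S := S.equivFin.symm
          let f : Fin S.card → Fin m₁ := fun i => (e i : Fin m₁ × Fin m₂).1
          let g : Fin S.card → Fin m₂ := fun i => (e i : Fin m₁ × Fin m₂).2
          have hQ : M.submatrix f g = 1 := by
            ext i j
            by_cases hij : i = j
            · subst hij
              have : ((e i : Fin m₁ × Fin m₂).1, (e i : Fin m₁ × Fin m₂).2) ∈ S := by
                simpa using (e i).2
              simp [Matrix.submatrix_apply, hM, f, g, this, Matrix.one_apply]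
            · have hnot : (f i, g j) ∉ S := by
                intro hmem
                apply hij
                have h1 : (f i, g j) = (e i : Fin m₁ × Fin m₂) := by
                  apply hmat _ hmem _ (e i).2
                  left; rfl
                have h2 : (f i, g j) = (e j : Fin m₁ × Fin m₂) := by
                  apply hmat _ hmem _ (e j).2
                  right; rfl
                apply e.injective
                exact Subtype.ext (h1 ▸ h2)
              simp [Matrix.submatrix_apply, hM, f, g, hnot, Matrix.one_apply, hij]
          have := rank_submatrix_le'' M f g
          rw [hQ, Matrix.rank_one, Fintype.card_fin] at this
          exact this
      apply le_csSup bddL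
      refine ⟨M, fun i j h => if_neg (fun hS => h (hSP hS)), hrank⟩
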